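/- Let A be the abelian group presented by generators ᾱ_1,…,ᾱ_n with relations ᾱ_q^2 = 0 for exactly those q such that there exists p < q with c_{p,q} = 1. If r is the number of such indices q, then A ≅ ℤ^{n-r} × (ℤ/2)^r. -/

import Mathlib

/-- The set of indices `q` admitting some `p < q` with Bott number `c p q = 1`. -/
def torsionIdx (n : ℕ) (c : Fin n → Fin n → ZMod 2) : Finset (Fin n) :=
  Finset.univ.filter (fun q => ∃ p, p < q ∧ c p q = 1)

/-- `H₁(Y(C); ℤ)`: the abelian group on generators `ᾱ_1, …, ᾱ_n` with relations
`2ᾱ_q = 0` exactly for `q ∈ torsionIdx n c`. -/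
def bottH1 (n : ℕ) (c : Fin n → Fin n → ZMod 2) : Type :=
  (Fin n → ℤ) ⧸ AddSubgroup.closure
    {x : Fin n → ℤ | ∃ q ∈ torsionIdx n c, x = 2 • Pi.single q 1}

instance (n : ℕ) (c : Fin n → Fin n → ZMod 2) : AddCommGroup (bottH1 n c) :=
  QuotientAddGroup.Quotient.addCommGroup _

/-- Reindexing an arrow type along an equivalence, as an `AddEquiv`. -/
def arrowCongrAdd {α β M : Type*} [AddCommMonoid M] (e : α ≃ β) : (α → M) ≃+ (β → M) :=
  { Equiv.arrowCongr e (Equiv.refl M) with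
    map_add' := fun _ _ => rfl }

theorem stmt_15 (n : ℕ) (c : Fin n → Fin n → ZMod 2) :
    Nonempty (bottH1 n c ≃+
      ((Fin (n - (torsionIdx n c).card) → ℤ) × (Fin ((torsionIdx n c).card) → ZMod 2))) := by
  classical
  set S := torsionIdx n c with hS
  -- the comparison hom
  let φ : (Fin n → ℤ) →+ (({q // q ∈ Sᶜ} → ℤ) × ({q // q ∈ S} → ZMod 2)) :=
  { toFun := fun x => (fun q => x q.1, fun q => (x q.1 : ZMod 2))
    map_zero' := by ext <;> simp
    map_add' := fun x y => by ext <;> simp }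
  have hsurj : Function.Surjective φ := by
    rintro ⟨a, b⟩
    refine ⟨fun q => if h : q ∈ S then ((b ⟨q, h⟩).val : ℤ) else a ⟨q, by simpa using h⟩, ?_⟩
    have h1 : (fun (q : {q // q ∈ Sᶜ}) =>
        (if h : q.1 ∈ S then ((b ⟨q.1, h⟩).val : ℤ) else a ⟨q.1, by simpa using h⟩)) = a := by
      funext q
      have hq : q.1 ∉ S := Finset.mem_compl.mp q.2
      simp [hq]
    have h2 : (fun (q : {q // q ∈ S}) =>
        (((if h : q.1 ∈ S then ((b ⟨q.1, h⟩).val : ℤ) else a ⟨q.1, by simpa using h⟩) : ℤ) :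
          ZMod 2)) = b := by
      funext q
      simp [q.2, ZMod.natCast_val, ZMod.intCast_cast, ZMod.cast_id]
    exact Prod.ext h1 h2
  have hker : AddSubgroup.closure
      {x : Fin n → ℤ | ∃ q ∈ S, x = 2 • Pi.single q 1} = φ.ker := by
    apply le_antisymm
    · rw [AddSubgroup.closure_le]
      rintro x ⟨q, hq, rfl⟩
      have h1 : (fun (p : {p // p ∈ Sᶜ}) => (2 • Pi.single q 1 : Fin n → ℤ) p.1) = 0 := by
        funext p
        have hp : p.1 ∉ S := Finset.mem_compl.mp p.2
        have : p.1 ≠ q := fun h => hp (h ▸ hq)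
        simp [Pi.single_eq_of_ne this]
      have h2 : (fun (p : {p // p ∈ S}) =>
          (((2 • Pi.single q 1 : Fin n → ℤ) p.1 : ℤ) : ZMod 2)) = 0 := by
        funext p
        have h2e : (2 • Pi.single q 1 : Fin n → ℤ) p.1 = 2 * (Pi.single q 1 : Fin n → ℤ) p.1 := by
          simp [Pi.smul_apply, two_smul, two_mul]
        show (((2 • Pi.single q 1 : Fin n → ℤ) p.1 : ℤ) : ZMod 2) = 0
        rw [h2e, Int.cast_mul, show ((2 : ℤ) : ZMod 2) = 0 by decide, zero_mul]
      exact AddMonoidHom.mem_ker.mpr (Prod.ext h1 h2)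
    · intro x hx
      rw [AddMonoidHom.mem_ker] at hx
      have h1 : ∀ q : Fin n, q ∉ S → x q = 0 := by
        intro q hq
        have := congrFun (congrArg Prod.fst hx) ⟨q, by simpa using hq⟩
        exact this
      have h2 : ∀ q : Fin n, q ∈ S → (2 : ℤ) ∣ x q := by
        intro q hq
        have := congrFun (congrArg Prod.snd hx) ⟨q, hq⟩
        have : ((x q : ℤ) : ZMod 2) = 0 := by exact this
        exact_mod_cast (ZMod.intCast_zmod_eq_zero_iff_dvd _ 2).mp this
      have hxsum : x = ∑ q : Fin n, Pi.single q (x q) := (Finset.univ_sum_single x).symm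
      rw [hxsum]
      apply AddSubgroup.sum_mem
      intro q _
      by_cases hq : q ∈ S
      · obtain ⟨k, hk⟩ := h2 q hq
        have : Pi.single q (x q) = k • (2 • (Pi.single q 1 : Fin n → ℤ)) := by
          funext p
          by_cases hp : p = q
          · subst hp
            simp [hk, Pi.single_eq_same]
            ring
          · simp [Pi.single_eq_of_ne hp]
        rw [this]
        exact AddSubgroup.zsmul_mem _ (AddSubgroup.subset_closure
          (show _ ∈ {x : Fin n → ℤ | ∃ q ∈ S, x = 2 • Pi.single q 1} from ⟨q, hq, rfl⟩)) k
      · rw [h1 q hq, Pi.single_zero]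
        exact zero_mem _
  -- assemble
  have e1 : bottH1 n c ≃+ (({q // q ∈ Sᶜ} → ℤ) × ({q // q ∈ S} → ZMod 2)) :=
    (QuotientAddGroup.quotientAddEquivOfEq hker).trans
      (QuotientAddGroup.quotientKerEquivOfSurjective φ hsurj)
  have card1 : Fintype.card {q // q ∈ Sᶜ} = n - S.card := by
    simp [Finset.card_compl]
  have card2 : Fintype.card {q // q ∈ S} = S.card := by simp
  have eC : {q // q ∈ Sᶜ} ≃ Fin (n - S.card) := Fintype.equivFinOfCardEq card1
  have eS : {q // q ∈ S} ≃ Fin S.card := Fintype.equivFinOfCardEq card2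
  exact ⟨e1.trans (AddEquiv.prodCongr (arrowCongrAdd eC) (arrowCongrAdd eS))⟩
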